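/- Let Σ₀, Σ be p×p positive definite matrices and let ψ₁,…,ψ_p > 0 be the eigenvalues of Σ^{−1/2} Σ₀ Σ^{−1/2}. Suppose ψ_j ≥ ε for all j, where ε ∈ (0, 1/2). Then log det(Σ₀Σ⁻¹) − tr(Σ₀Σ⁻¹ − I) ≥ −4·log(1/ε)·‖Σ^{−1/2} Σ₀ Σ^{−1/2} − I‖_F². -/

import Mathlib

open Matrix
open scoped MatrixOrder

/-- Frobenius norm of a real square matrix: `√(tr (Aᵀ A))`. -/
noncomputable def frobNorm {p : ℕ} (A : Matrix (Fin p) (Fin p) ℝ) : ℝ :=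
  Real.sqrt (Matrix.trace (Aᵀ * A))

lemma scalar_ineq (ε x : ℝ) (hε0 : 0 < ε) (hε2 : ε < 1/2) (hx : ε ≤ x) :
    -(4 * Real.log (1/ε)) * (x-1)^2 ≤ Real.log x - (x - 1) := by
  have hx0 : 0 < x := lt_of_lt_of_le hε0 hx
  have h2 : (2:ℝ) ≤ 1/ε := by rw [le_div_iff₀ hε0]; linarith
  have hL2 : Real.log 2 ≤ Real.log (1/ε) := Real.log_le_log two_pos h2
  have hLpos : (0.6931471803 : ℝ) < Real.log (1/ε) :=
    lt_of_lt_of_le Real.log_two_gt_d9 hL2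
  have hlinv : Real.log (1/ε) = -Real.log ε := by rw [one_div, Real.log_inv]
  rcases le_or_gt (1/2 : ℝ) x with hcase | hcase
  · -- x ≥ 1/2
    have hlog : 1 - 1/x ≤ Real.log x := by
      have h := Real.log_le_sub_one_of_pos (show (0:ℝ) < 1/x from one_div_pos.mpr hx0)
      rw [one_div, Real.log_inv] at h
      have : 1 - x⁻¹ ≤ Real.log x := by linarith
      simpa [one_div] using this
    have key : x - 2 + 1/x ≤ 2*(x-1)^2 := by
      have heq : x - 2 + 1/x = (x-1)^2 / x := by field_simp; ring
      rw [heq, div_le_iff₀ hx0]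
      nlinarith [sq_nonneg (x-1)]
    nlinarith [mul_nonneg (show (0:ℝ) ≤ 4*Real.log (1/ε) - 2 by linarith) (sq_nonneg (x-1))]
  · -- ε ≤ x < 1/2
    have hlogx : Real.log ε ≤ Real.log x := Real.log_le_log hε0 hx
    have hq : (1/4:ℝ) ≤ (x-1)^2 := by nlinarith
    nlinarith [mul_le_mul_of_nonneg_left hq
      (show (0:ℝ) ≤ 4*Real.log (1/ε) by linarith)]

lemma conj_diag {n : ℕ} {A : Matrix (Fin n) (Fin n) ℝ} (hA : A.IsHermitian) :
    A = (hA.eigenvectorUnitary : Matrix (Fin n) (Fin n) ℝ) *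
        Matrix.diagonal hA.eigenvalues *
        star (hA.eigenvectorUnitary : Matrix (Fin n) (Fin n) ℝ) := by
  have h := hA.spectral_theorem
  simpa using h

lemma trace_eq_sum_eigs {n : ℕ} {A : Matrix (Fin n) (Fin n) ℝ} (hA : A.IsHermitian) :
    Matrix.trace A = ∑ i, hA.eigenvalues i := by
  conv_lhs => rw [conj_diag hA]
  rw [Matrix.trace_mul_cycle, Unitary.coe_star_mul_self, Matrix.one_mul, Matrix.trace_diagonal]

lemma trace_sq_shift {n : ℕ} {A : Matrix (Fin n) (Fin n) ℝ} (hA : A.IsHermitian) :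
    Matrix.trace ((A - 1) * (A - 1)) = ∑ i, (hA.eigenvalues i - 1)^2 := by
  set U : Matrix (Fin n) (Fin n) ℝ := (hA.eigenvectorUnitary : Matrix (Fin n) (Fin n) ℝ)
  have hU : star U * U = 1 := Unitary.coe_star_mul_self hA.eigenvectorUnitary
  have hU' : U * star U = 1 := Unitary.coe_mul_star_self hA.eigenvectorUnitary
  have h1 : A - 1 = U * Matrix.diagonal (fun i => hA.eigenvalues i - 1) * star U := by
    have hd : Matrix.diagonal (fun i => hA.eigenvalues i - 1)
        = Matrix.diagonal hA.eigenvalues - 1 := by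
      rw [← Matrix.diagonal_one, Matrix.diagonal_sub]
    rw [hd, Matrix.mul_sub, Matrix.mul_one, Matrix.sub_mul, hU']
    rw [← conj_diag hA]
  rw [h1]
  have h2 : (U * Matrix.diagonal (fun i => hA.eigenvalues i - 1) * star U) *
      (U * Matrix.diagonal (fun i => hA.eigenvalues i - 1) * star U)
      = U * (Matrix.diagonal (fun i => hA.eigenvalues i - 1) *
          Matrix.diagonal (fun i => hA.eigenvalues i - 1)) * star U := by
    simp only [Matrix.mul_assoc]
    rw [← Matrix.mul_assoc (star U) U, hU, Matrix.one_mul]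
  rw [h2, Matrix.trace_mul_cycle, hU, Matrix.one_mul,
    Matrix.diagonal_mul_diagonal, Matrix.trace_diagonal]
  simp [pow_two]

/-- If all eigenvalues of `Σ^{−1/2} Σ₀ Σ^{−1/2}` are at least `ε ∈ (0, 1/2)`, then
`log det(Σ₀ Σ⁻¹) − tr(Σ₀ Σ⁻¹ − I) ≥ −4 log(1/ε) ‖Σ^{−1/2} Σ₀ Σ^{−1/2} − I‖_F²`. -/
theorem stmt_17 {p : ℕ} (S₀ S : Matrix (Fin p) (Fin p) ℝ)
    (h₀ : S₀.PosDef) (h : S.PosDef) (ε : ℝ) (hε : ε ∈ Set.Ioo (0 : ℝ) (1 / 2))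
    (hM : ((CFC.sqrt S)⁻¹ * S₀ * (CFC.sqrt S)⁻¹).IsHermitian)
    (heig : ∀ j, ε ≤ hM.eigenvalues j) :
    -(4 * Real.log (1 / ε)) *
        frobNorm ((CFC.sqrt S)⁻¹ * S₀ * (CFC.sqrt S)⁻¹ - 1) ^ 2 ≤
      Real.log (Matrix.det (S₀ * S⁻¹)) - Matrix.trace (S₀ * S⁻¹ - 1) := by
  obtain ⟨hε0, hε2⟩ := hε
  set Q : Matrix (Fin p) (Fin p) ℝ := CFC.sqrt S with hQdef
  set M : Matrix (Fin p) (Fin p) ℝ := Q⁻¹ * S₀ * Q⁻¹ with hMdef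
  have hQQ : Q * Q = S := CFC.sqrt_mul_sqrt_self S (Matrix.nonneg_iff_posSemidef.mpr h.posSemidef)
  have hdetS : 0 < S.det := h.det_pos
  have hdetQ : Q.det * Q.det = S.det := by rw [← Matrix.det_mul, hQQ]
  have hQ0 : Q.det ≠ 0 := by
    intro hc; rw [hc, mul_zero] at hdetQ; exact hdetS.ne' hdetQ.symm
  have hSinv : S⁻¹ = Q⁻¹ * Q⁻¹ := by rw [← hQQ, Matrix.mul_inv_rev]
  -- identify det and trace
  have hdet : (S₀ * S⁻¹).det = M.det := by
    rw [hSinv, hMdef, Matrix.det_mul, Matrix.det_mul, Matrix.det_mul, Matrix.det_mul]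
    ring
  have htr : Matrix.trace (S₀ * S⁻¹) = Matrix.trace M := by
    rw [hSinv, ← Matrix.mul_assoc, Matrix.trace_mul_cycle]
  -- eigenvalue facts
  have hψpos : ∀ j, 0 < hM.eigenvalues j := fun j => lt_of_lt_of_le hε0 (heig j)
  have hdetM : M.det = ∏ i, hM.eigenvalues i := by
    have := hM.det_eq_prod_eigenvalues
    simpa using this
  have hlogdet : Real.log ((S₀ * S⁻¹).det) = ∑ i, Real.log (hM.eigenvalues i) := by
    rw [hdet, hdetM, Real.log_prod]
    intro i _
    exact (hψpos i).ne'
  have htrM : Matrix.trace M = ∑ i, hM.eigenvalues i := trace_eq_sum_eigs hM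
  have hfrob : frobNorm (M - 1) ^ 2 = ∑ i, (hM.eigenvalues i - 1)^2 := by
    have hherm : (M - 1)ᵀ = M - 1 := by
      have := hM.eq
      rw [Matrix.transpose_sub, Matrix.transpose_one, ← Matrix.conjTranspose_eq_transpose_of_trivial, this]
    rw [frobNorm, hherm, Real.sq_sqrt]
    · exact trace_sq_shift hM
    · rw [trace_sq_shift hM]
      exact Finset.sum_nonneg fun i _ => sq_nonneg _
  have htr1 : Matrix.trace (S₀ * S⁻¹ - 1) = (∑ i, hM.eigenvalues i) - (p : ℝ) := by
    rw [Matrix.trace_sub, htr, htrM, Matrix.trace_one]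
    simp
  rw [hlogdet, htr1, hfrob]
  have key : ∀ i ∈ Finset.univ (α := Fin p),
      -(4 * Real.log (1/ε)) * (hM.eigenvalues i - 1)^2 ≤
        Real.log (hM.eigenvalues i) - (hM.eigenvalues i - 1) :=
    fun i _ => scalar_ineq ε _ hε0 hε2 (heig i)
  calc -(4 * Real.log (1 / ε)) * ∑ i, (hM.eigenvalues i - 1)^2
      = ∑ i, -(4 * Real.log (1/ε)) * (hM.eigenvalues i - 1)^2 := by
        rw [Finset.mul_sum]
    _ ≤ ∑ i, (Real.log (hM.eigenvalues i) - (hM.eigenvalues i - 1)) :=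
        Finset.sum_le_sum key
    _ = (∑ i, Real.log (hM.eigenvalues i)) - ((∑ i, hM.eigenvalues i) - (p : ℝ)) := by
        rw [Finset.sum_sub_distrib, Finset.sum_sub_distrib]
        simp
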